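/- If f(x) = (1-x)^γ ln(1-x) with γ a positive integer, then the Chebyshev coefficients a_k of f satisfy a_k = O(k^{-2γ-1}) as k → ∞ (i.e., the logarithmic factor in the generic estimate O(ln(k) k^{-2γ-1}) disappears when γ is an integer and μ = 1). -/

import Mathlib

open Real Filter Asymptotics MeasureTheory Set intervalIntegral Polynomial.Chebyshev Finset

noncomputable def Jint (γ : ℕ) (k : ℤ) : ℝ :=
  ∫ x in (-1 : ℝ)..1,
    ((1 - x) ^ γ * Real.log (1 - x)) * (Polynomial.Chebyshev.T ℝ k).eval x /
      Real.sqrt (1 - x ^ 2)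

noncomputable def Pp (γ : ℕ) (t : ℝ) : ℝ := ∏ j ∈ Finset.range (2 * γ + 1), (t - γ + j)

noncomputable def cc : ℕ → ℝ
  | 0 => -π
  | (γ + 1) => -((γ : ℝ) + 1) * (2 * γ + 1) * cc γ


lemma abs_sin_nat_mul_le (n : ℕ) (x : ℝ) : |Real.sin (n * x)| ≤ n * |Real.sin x| := by
  induction n with
  | zero => simp
  | succ n ih =>
      push_cast
      have : Real.sin ((n + 1 : ℝ) * x) = Real.sin (n * x) * Real.cos x
          + Real.cos (n * x) * Real.sin x := by
        rw [show (n + 1 : ℝ) * x = n * x + x by ring, Real.sin_add]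
      rw [this]
      calc |Real.sin (n*x) * Real.cos x + Real.cos (n*x) * Real.sin x|
          ≤ |Real.sin (n*x) * Real.cos x| + |Real.cos (n*x) * Real.sin x| := abs_add_le _ _
        _ ≤ |Real.sin (n*x)| * 1 + 1 * |Real.sin x| := by
            rw [abs_mul, abs_mul]
            gcongr
            · exact Real.abs_cos_le_one x
            · exact Real.abs_cos_le_one _
        _ ≤ n * |Real.sin x| + 1 * |Real.sin x| := by
            rw [mul_one]; gcongr
        _ = (n + 1) * |Real.sin x| := by ring


lemma abs_log_le {u : ℝ} (hu : 0 < u) (hu2 : u ≤ 2) : |Real.log u| ≤ 4 * u ^ (-(1/4) : ℝ) := by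
  have h4 : (0:ℝ) < 1/4 := by norm_num
  have hinv : (u⁻¹) ^ (1/4 : ℝ) = u ^ (-(1/4) : ℝ) := by
    rw [Real.inv_rpow hu.le, Real.rpow_neg hu.le]
  rcases le_or_gt 1 u with h | h
  · rw [abs_of_nonneg (Real.log_nonneg h)]
    have h1 : Real.log u ≤ 1 := (Real.log_le_sub_one_of_pos hu).trans (by linarith)
    have h2 : u ^ (1/4 : ℝ) ≤ 2 := by
      calc u ^ (1/4 : ℝ) ≤ 2 ^ (1/4 : ℝ) := Real.rpow_le_rpow hu.le hu2 h4.le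
        _ ≤ 2 ^ (1 : ℝ) := Real.rpow_le_rpow_of_exponent_le one_le_two (by norm_num)
        _ = 2 := Real.rpow_one 2
    have h3 : (1:ℝ)/2 ≤ u ^ (-(1/4) : ℝ) := by
      rw [Real.rpow_neg hu.le]
      have hv : (0:ℝ) < u ^ (1/4 : ℝ) := Real.rpow_pos_of_pos hu _
      rw [show (1:ℝ)/2 = 2⁻¹ by norm_num]
      exact inv_anti₀ hv h2
    linarith
  · rw [abs_of_nonpos (Real.log_nonpos hu.le h.le)]
    have := Real.log_le_rpow_div (le_of_lt (by positivity : (0:ℝ) < u⁻¹)) h4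
    rw [Real.log_inv] at this
    calc -Real.log u ≤ (u⁻¹) ^ (1/4 : ℝ) / (1/4) := this
      _ = 4 * u ^ (-(1/4) : ℝ) := by rw [hinv]; ring


lemma rpow_le_two_rpow {u a b : ℝ} (hu : 0 < u) (hu2 : u ≤ 2) (hab : b ≤ a) :
    u ^ a ≤ 2 ^ (a - b) * u ^ b := by
  have : u ^ a = u ^ (a - b) * u ^ b := by rw [← Real.rpow_add hu]; ring_nf
  rw [this]
  have h1 : u ^ (a-b) ≤ 2 ^ (a-b) := Real.rpow_le_rpow hu.le hu2 (by linarith)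
  have h2 : (0:ℝ) ≤ u ^ b := Real.rpow_nonneg hu.le _
  nlinarith [Real.rpow_nonneg hu.le (a-b)]

lemma sqrt_pos_of_mem {x : ℝ} (hx : x ∈ Ioo (-1 : ℝ) 1) : 0 < Real.sqrt (1 - x ^ 2) := by
  obtain ⟨h1, h2⟩ := hx
  apply Real.sqrt_pos.mpr; nlinarith

lemma sqrt_eq_mul {x : ℝ} (hx : x ∈ Ioo (-1 : ℝ) 1) :
    Real.sqrt (1 - x ^ 2) = Real.sqrt (1 - x) * Real.sqrt (1 + x) := by
  rw [← Real.sqrt_mul (by nlinarith [hx.1, hx.2] : (0:ℝ) ≤ 1 - x)]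
  ring_nf

lemma T_eval_eq_cos {x : ℝ} (hx : x ∈ Icc (-1 : ℝ) 1) (k : ℤ) :
    (Polynomial.Chebyshev.T ℝ k).eval x = Real.cos (k * Real.arccos x) := by
  conv_lhs => rw [← Real.cos_arccos hx.1 hx.2]
  exact Polynomial.Chebyshev.T_real_cos (Real.arccos x) k

lemma abs_T_le {x : ℝ} (hx : x ∈ Icc (-1 : ℝ) 1) (k : ℤ) :
    |(Polynomial.Chebyshev.T ℝ k).eval x| ≤ 1 := by
  rw [T_eval_eq_cos hx k]; exact Real.abs_cos_le_one _


lemma int_dom : IntervalIntegrable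
    (fun x : ℝ => (1 + x) ^ (-(3/4) : ℝ) * (1 - x) ^ (-(3/4) : ℝ)) volume (-1) 1 := by
  have hr : (-1 : ℝ) < -(3/4) := by norm_num
  apply IntervalIntegrable.trans (b := 0)
  · -- on [-1, 0]
    rw [intervalIntegrable_iff_integrableOn_Ioo_of_le (by norm_num)]
    have h1 : IntegrableOn (fun x : ℝ => (1 + x) ^ (-(3/4) : ℝ)) (Ioo (-1) 0) volume := by
      have h0 := (intervalIntegral.intervalIntegrable_rpow' (a := 0) (b := 1) hr).comp_add_right 1
      norm_num at h0
      have h0' : IntervalIntegrable (fun x : ℝ => (1 + x) ^ (-(3/4) : ℝ)) volume (-1) 0 := by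
        simpa [add_comm] using h0
      exact (intervalIntegrable_iff_integrableOn_Ioo_of_le (by norm_num)).1 h0'
    apply h1.mono'
    · apply ContinuousOn.aestronglyMeasurable ?_ measurableSet_Ioo
      apply ContinuousOn.mul
      · exact ContinuousOn.rpow_const (by fun_prop) (fun x hx => Or.inl (by nlinarith [hx.1]))
      · exact ContinuousOn.rpow_const (by fun_prop) (fun x hx => Or.inl (by nlinarith [hx.2]))
    · refine (ae_restrict_iff' measurableSet_Ioo).2 (ae_of_all _ fun x hx => ?_)
      have hx1 : 0 < 1 + x := by nlinarith [hx.1]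
      have hx2 : (1:ℝ) ≤ 1 - x := by nlinarith [hx.2]
      have hb : (1 - x) ^ (-(3/4) : ℝ) ≤ 1 :=
        Real.rpow_le_one_of_one_le_of_nonpos hx2 (by norm_num)
      have hnn : (0:ℝ) ≤ (1 + x) ^ (-(3/4) : ℝ) := Real.rpow_nonneg hx1.le _
      have hnn2 : (0:ℝ) ≤ (1 - x) ^ (-(3/4) : ℝ) := Real.rpow_nonneg (by linarith) _
      simp only [Real.norm_eq_abs, abs_of_nonneg (mul_nonneg hnn hnn2)]
      nlinarith
  · -- on [0, 1]
    rw [intervalIntegrable_iff_integrableOn_Ioo_of_le (by norm_num)]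
    have h1 : IntegrableOn (fun x : ℝ => (1 - x) ^ (-(3/4) : ℝ)) (Ioo 0 1) volume := by
      have h0 := (intervalIntegral.intervalIntegrable_rpow' (a := 0) (b := 1) hr).comp_sub_left 1
      norm_num at h0
      exact (intervalIntegrable_iff_integrableOn_Ioo_of_le (by norm_num)).1 h0.symm
    apply h1.mono'
    · apply ContinuousOn.aestronglyMeasurable ?_ measurableSet_Ioo
      apply ContinuousOn.mul
      · exact ContinuousOn.rpow_const (by fun_prop) (fun x hx => Or.inl (by nlinarith [hx.1]))
      · exact ContinuousOn.rpow_const (by fun_prop) (fun x hx => Or.inl (by nlinarith [hx.2]))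
    · refine (ae_restrict_iff' measurableSet_Ioo).2 (ae_of_all _ fun x hx => ?_)
      have hx1 : (1:ℝ) ≤ 1 + x := by nlinarith [hx.1]
      have hx2 : (0:ℝ) < 1 - x := by nlinarith [hx.2]
      have hb : (1 + x) ^ (-(3/4) : ℝ) ≤ 1 :=
        Real.rpow_le_one_of_one_le_of_nonpos hx1 (by norm_num)
      have hnn : (0:ℝ) ≤ (1 + x) ^ (-(3/4) : ℝ) := Real.rpow_nonneg (by linarith) _
      have hnn2 : (0:ℝ) ≤ (1 - x) ^ (-(3/4) : ℝ) := Real.rpow_nonneg hx2.le _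
      simp only [Real.norm_eq_abs, abs_of_nonneg (mul_nonneg hnn hnn2)]
      nlinarith

lemma II_master {g : ℝ → ℝ} (hg : ContinuousOn g (Ioo (-1) 1)) {C : ℝ}
    (hb : ∀ x ∈ Ioo (-1 : ℝ) 1,
      |g x| ≤ C * ((1 + x) ^ (-(3/4) : ℝ) * (1 - x) ^ (-(3/4) : ℝ))) :
    IntervalIntegrable g volume (-1) 1 := by
  rw [intervalIntegrable_iff_integrableOn_Ioo_of_le (by norm_num)]
  have hdom : IntegrableOn
      (fun x : ℝ => C * ((1 + x) ^ (-(3/4) : ℝ) * (1 - x) ^ (-(3/4) : ℝ)))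
      (Ioo (-1) 1) volume :=
    ((intervalIntegrable_iff_integrableOn_Ioo_of_le (by norm_num)).1
      (int_dom.const_mul C))
  apply hdom.mono'
  · exact hg.aestronglyMeasurable measurableSet_Ioo
  · refine (ae_restrict_iff' measurableSet_Ioo).2 (ae_of_all _ fun x hx => ?_)
    simpa [Real.norm_eq_abs] using hb x hx


lemma mem_facts {x : ℝ} (hx : x ∈ Ioo (-1 : ℝ) 1) :
    0 < 1 - x ∧ 1 - x ≤ 2 ∧ 0 < 1 + x ∧ 1 + x ≤ 2 := by
  obtain ⟨h1, h2⟩ := hx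
  exact ⟨by linarith, by linarith, by linarith, by linarith⟩

lemma inv_sqrt_eq {x : ℝ} (hx : x ∈ Ioo (-1 : ℝ) 1) :
    (Real.sqrt (1 - x ^ 2))⁻¹ = (1 + x) ^ (-(1/2) : ℝ) * (1 - x) ^ (-(1/2) : ℝ) := by
  obtain ⟨h1, h2, h3, h4⟩ := mem_facts hx
  rw [sqrt_eq_mul hx, Real.sqrt_eq_rpow, Real.sqrt_eq_rpow,
    Real.rpow_neg h3.le, Real.rpow_neg h1.le, mul_inv, mul_comm]

lemma sqrt_prod_eq {x : ℝ} (hx : x ∈ Ioo (-1 : ℝ) 1) :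
    Real.sqrt (1 - x ^ 2) = (1 + x) ^ ((1/2) : ℝ) * (1 - x) ^ ((1/2) : ℝ) := by
  rw [sqrt_eq_mul hx, Real.sqrt_eq_rpow, Real.sqrt_eq_rpow, mul_comm]

lemma rpow_prod_bound {x : ℝ} (hx : x ∈ Ioo (-1 : ℝ) 1) {a b : ℝ}
    (ha : -(3/4) ≤ a) (hb : -(3/4) ≤ b) :
    (1 + x) ^ a * (1 - x) ^ b ≤
      2 ^ (a + b + 3/2) * ((1 + x) ^ (-(3/4) : ℝ) * (1 - x) ^ (-(3/4) : ℝ)) := by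
  obtain ⟨h1, h2, h3, h4⟩ := mem_facts hx
  have e1 : (1 + x) ^ a ≤ 2 ^ (a + 3/4) * (1 + x) ^ (-(3/4) : ℝ) := by
    have := rpow_le_two_rpow h3 h4 ha
    rwa [show a - -(3/4) = a + 3/4 by ring] at this
  have e2 : (1 - x) ^ b ≤ 2 ^ (b + 3/4) * (1 - x) ^ (-(3/4) : ℝ) := by
    have := rpow_le_two_rpow h1 h2 hb
    rwa [show b - -(3/4) = b + 3/4 by ring] at this
  calc (1 + x) ^ a * (1 - x) ^ b
      ≤ (2 ^ (a + 3/4) * (1 + x) ^ (-(3/4) : ℝ)) * (2 ^ (b + 3/4) * (1 - x) ^ (-(3/4) : ℝ)) := by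
        apply mul_le_mul e1 e2 (Real.rpow_nonneg h1.le _) (by positivity)
    _ = (2 ^ (a + 3/4) * 2 ^ (b + 3/4)) * ((1 + x) ^ (-(3/4) : ℝ) * (1 - x) ^ (-(3/4) : ℝ)) := by
        ring
    _ = 2 ^ (a + b + 3/2) * ((1 + x) ^ (-(3/4) : ℝ) * (1 - x) ^ (-(3/4) : ℝ)) := by
        rw [← Real.rpow_add (by norm_num : (0:ℝ) < 2)]
        ring_nf

lemma contT (k : ℤ) : Continuous fun x : ℝ => (Polynomial.Chebyshev.T ℝ k).eval x :=
  Polynomial.continuous _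

lemma i1 (k : ℤ) : IntervalIntegrable
    (fun x : ℝ => (Polynomial.Chebyshev.T ℝ k).eval x / Real.sqrt (1 - x ^ 2))
    volume (-1) 1 := by
  apply II_master (C := 2 ^ ((3:ℝ)/2 - 1))
  · apply ContinuousOn.div (contT k).continuousOn (by fun_prop)
    exact fun x hx => (sqrt_pos_of_mem hx).ne'
  · intro x hx
    obtain ⟨h1, h2, h3, h4⟩ := mem_facts hx
    have hTb := abs_T_le (Ioo_subset_Icc_self hx) k
    calc |(Polynomial.Chebyshev.T ℝ k).eval x / Real.sqrt (1 - x ^ 2)|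
        = |(Polynomial.Chebyshev.T ℝ k).eval x| * (Real.sqrt (1 - x ^ 2))⁻¹ := by
          rw [abs_div, abs_of_nonneg (Real.sqrt_nonneg _), div_eq_mul_inv]
      _ ≤ 1 * (Real.sqrt (1 - x ^ 2))⁻¹ := by
          apply mul_le_mul_of_nonneg_right hTb (by positivity)
      _ = (1 + x) ^ (-(1/2) : ℝ) * (1 - x) ^ (-(1/2) : ℝ) := by
          rw [one_mul, inv_sqrt_eq hx]
      _ ≤ 2 ^ (-(1/2) + -(1/2) + (3:ℝ)/2) *
            ((1 + x) ^ (-(3/4) : ℝ) * (1 - x) ^ (-(3/4) : ℝ)) :=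
          rpow_prod_bound hx (by norm_num) (by norm_num)
      _ = 2 ^ ((3:ℝ)/2 - 1) * ((1 + x) ^ (-(3/4) : ℝ) * (1 - x) ^ (-(3/4) : ℝ)) := by
          norm_num

lemma i2 (γ : ℕ) (k : ℤ) : IntervalIntegrable
    (fun x : ℝ => ((1 - x) ^ γ * Real.log (1 - x)) * (Polynomial.Chebyshev.T ℝ k).eval x /
      Real.sqrt (1 - x ^ 2)) volume (-1) 1 := by
  apply II_master (C := 2 ^ (γ : ℝ) * 4 * 2 ^ (-(1/2) + -(3/4) + (3:ℝ)/2))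
  · apply ContinuousOn.div ?_ (by fun_prop) (fun x hx => (sqrt_pos_of_mem hx).ne')
    apply ContinuousOn.mul
    · apply ContinuousOn.mul (by fun_prop)
      apply ContinuousOn.log (by fun_prop)
      exact fun x hx => (mem_facts hx).1.ne'
    · exact (contT k).continuousOn
  · intro x hx
    obtain ⟨h1, h2, h3, h4⟩ := mem_facts hx
    have hTb := abs_T_le (Ioo_subset_Icc_self hx) k
    have hlog := abs_log_le h1 h2
    have hpow : (1 - x) ^ γ ≤ 2 ^ γ := pow_le_pow_left₀ h1.le h2 γ
    calc |((1 - x) ^ γ * Real.log (1 - x)) * (Polynomial.Chebyshev.T ℝ k).eval x /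
          Real.sqrt (1 - x ^ 2)|
        = (1 - x) ^ γ * |Real.log (1 - x)| * |(Polynomial.Chebyshev.T ℝ k).eval x| *
            (Real.sqrt (1 - x ^ 2))⁻¹ := by
          rw [abs_div, abs_of_nonneg (Real.sqrt_nonneg _), abs_mul, abs_mul,
            abs_of_nonneg (pow_nonneg h1.le γ), div_eq_mul_inv]
      _ ≤ 2 ^ γ * (4 * (1 - x) ^ (-(1/4) : ℝ)) * 1 * (Real.sqrt (1 - x ^ 2))⁻¹ := by
          gcongr
      _ = 2 ^ (γ:ℝ) * 4 * ((1 + x) ^ (-(1/2) : ℝ) *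
            ((1 - x) ^ (-(1/4) : ℝ) * (1 - x) ^ (-(1/2) : ℝ))) := by
          rw [inv_sqrt_eq hx, Real.rpow_natCast]
          ring
      _ = 2 ^ (γ:ℝ) * 4 * ((1 + x) ^ (-(1/2) : ℝ) * (1 - x) ^ (-(3/4) : ℝ)) := by
          rw [← Real.rpow_add h1]
          norm_num
      _ ≤ 2 ^ (γ:ℝ) * 4 * (2 ^ (-(1/2) + -(3/4) + (3:ℝ)/2) *
            ((1 + x) ^ (-(3/4) : ℝ) * (1 - x) ^ (-(3/4) : ℝ))) := by
          have := rpow_prod_bound hx (a := -(1/2)) (b := -(3/4)) (by norm_num) (by norm_num)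
          gcongr
      _ = 2 ^ (γ:ℝ) * 4 * 2 ^ (-(1/2) + -(3/4) + (3:ℝ)/2) *
            ((1 + x) ^ (-(3/4) : ℝ) * (1 - x) ^ (-(3/4) : ℝ)) := by ring

lemma i3 (k : ℕ) : IntervalIntegrable
    (fun x : ℝ => Real.sin (k * Real.arccos x) / (1 - x)) volume (-1) 1 := by
  apply II_master (C := (k : ℝ) * 2 ^ ((1:ℝ)/2 + -(1/2) + (3:ℝ)/2))
  · apply ContinuousOn.div
      (Real.continuous_sin.comp (continuous_const.mul Real.continuous_arccos)).continuousOn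
      (by fun_prop) (fun x hx => (mem_facts hx).1.ne')
  · intro x hx
    obtain ⟨h1, h2, h3, h4⟩ := mem_facts hx
    have hsin : |Real.sin (k * Real.arccos x)| ≤ k * Real.sqrt (1 - x ^ 2) := by
      have := abs_sin_nat_mul_le k (Real.arccos x)
      rwa [Real.sin_arccos, abs_of_nonneg (Real.sqrt_nonneg _)] at this
    calc |Real.sin (k * Real.arccos x) / (1 - x)|
        = |Real.sin (k * Real.arccos x)| * (1 - x)⁻¹ := by
          rw [abs_div, abs_of_pos h1, div_eq_mul_inv]
      _ ≤ (k * Real.sqrt (1 - x ^ 2)) * (1 - x)⁻¹ := by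
          apply mul_le_mul_of_nonneg_right hsin (by positivity)
      _ = (k : ℝ) * ((1 + x) ^ ((1:ℝ)/2) * ((1 - x) ^ ((1:ℝ)/2) * (1 - x) ^ (-1 : ℝ))) := by
          rw [sqrt_prod_eq hx, Real.rpow_neg_one]
          ring
      _ = (k : ℝ) * ((1 + x) ^ ((1:ℝ)/2) * (1 - x) ^ (-(1/2) : ℝ)) := by
          rw [← Real.rpow_add h1]
          norm_num
      _ ≤ (k : ℝ) * (2 ^ ((1:ℝ)/2 + -(1/2) + (3:ℝ)/2) *
            ((1 + x) ^ (-(3/4) : ℝ) * (1 - x) ^ (-(3/4) : ℝ))) := by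
          have := rpow_prod_bound hx (a := (1:ℝ)/2) (b := -(1/2)) (by norm_num) (by norm_num)
          gcongr
      _ = (k : ℝ) * 2 ^ ((1:ℝ)/2 + -(1/2) + (3:ℝ)/2) *
            ((1 + x) ^ (-(3/4) : ℝ) * (1 - x) ^ (-(3/4) : ℝ)) := by ring


lemma hasDerivAt_sinka {x : ℝ} (hx : x ∈ Ioo (-1 : ℝ) 1) (k : ℤ) :
    HasDerivAt (fun y => Real.sin (k * Real.arccos y))
      (-(k * ((Polynomial.Chebyshev.T ℝ k).eval x / Real.sqrt (1 - x ^ 2)))) x := by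
  have ha : HasDerivAt Real.arccos (-(1 / Real.sqrt (1 - x ^ 2))) x :=
    Real.hasDerivAt_arccos hx.1.ne' hx.2.ne
  have hm : HasDerivAt (fun y => (k : ℝ) * Real.arccos y)
      ((k : ℝ) * -(1 / Real.sqrt (1 - x ^ 2))) x := ha.const_mul _
  have hs := (Real.hasDerivAt_sin ((k : ℝ) * Real.arccos x)).comp x hm
  refine hs.congr_deriv ?_
  symm
  rw [← T_eval_eq_cos (Ioo_subset_Icc_self hx) k]
  field_simp

lemma orth (m : ℤ) (hm : 1 ≤ m) :
    ∫ x in (-1 : ℝ)..1, (Polynomial.Chebyshev.T ℝ m).eval x / Real.sqrt (1 - x ^ 2) = 0 := by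
  have hm0 : (m : ℝ) ≠ 0 := by exact_mod_cast (by omega : m ≠ 0)
  have hcont : Continuous (fun y : ℝ => -(1 / (m : ℝ)) * Real.sin (m * Real.arccos y)) := by
    exact continuous_const.mul (Real.continuous_sin.comp (continuous_const.mul
      Real.continuous_arccos))
  have hderiv : ∀ x ∈ Ioo (-1 : ℝ) 1,
      HasDerivAt (fun y => -(1 / (m : ℝ)) * Real.sin (m * Real.arccos y))
        ((Polynomial.Chebyshev.T ℝ m).eval x / Real.sqrt (1 - x ^ 2)) x := by
    intro x hx
    have h := (hasDerivAt_sinka hx m).const_mul (-(1 / (m : ℝ)))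
    refine h.congr_deriv ?_
    symm
    field_simp
  have ha : Tendsto (fun y : ℝ => -(1 / (m : ℝ)) * Real.sin (m * Real.arccos y))
      (nhdsWithin (-1) (Ioi (-1))) (nhds 0) := by
    have := (hcont.tendsto (-1)).mono_left (nhdsWithin_le_nhds (s := Ioi (-1)))
    simpa [Real.arccos_neg_one, Real.sin_int_mul_pi] using this
  have hb : Tendsto (fun y : ℝ => -(1 / (m : ℝ)) * Real.sin (m * Real.arccos y))
      (nhdsWithin 1 (Iio 1)) (nhds 0) := by
    have := (hcont.tendsto 1).mono_left (nhdsWithin_le_nhds (s := Iio 1))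
    simpa [Real.arccos_one] using this
  have := intervalIntegral.integral_eq_sub_of_hasDerivAt_of_tendsto (by norm_num : (-1:ℝ) < 1)
    hderiv (i1 m) ha hb
  simpa using this


lemma trig_id (n : ℕ) (θ : ℝ) :
    (Real.sin ((n + 1) * θ) - Real.sin (n * θ)) * Real.sin θ
      = (Real.cos ((n + 1) * θ) + Real.cos (n * θ)) * (1 - Real.cos θ) := by
  have h : Real.sin θ ^ 2 + Real.cos θ ^ 2 = 1 := Real.sin_sq_add_cos_sq θ
  rw [show ((n:ℝ) + 1) * θ = n * θ + θ by ring, Real.sin_add, Real.cos_add]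
  linear_combination Real.cos ((n:ℝ) * θ) * h

lemma sval (k : ℕ) (hk : 1 ≤ k) :
    ∫ x in (-1 : ℝ)..1, Real.sin (k * Real.arccos x) / (1 - x) = π := by
  induction k, hk using Nat.le_induction with
  | base =>
      have hcont : Continuous (fun y : ℝ => Real.arcsin y - Real.sqrt (1 - y ^ 2)) :=
        Real.continuous_arcsin.sub ((continuous_const.sub (continuous_pow 2)).sqrt)
      have hderiv : ∀ x ∈ Ioo (-1 : ℝ) 1,
          HasDerivAt (fun y => Real.arcsin y - Real.sqrt (1 - y ^ 2))
            (Real.sin ((1:ℕ) * Real.arccos x) / (1 - x)) x := by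
        intro x hx
        have h1 : (0:ℝ) < 1 - x := by nlinarith [hx.2]
        have h2 : (0:ℝ) < 1 - x ^ 2 := by nlinarith [hx.1, hx.2]
        have hsq : Real.sqrt (1 - x ^ 2) > 0 := sqrt_pos_of_mem hx
        have harc : HasDerivAt Real.arcsin (1 / Real.sqrt (1 - x ^ 2)) x :=
          Real.hasDerivAt_arcsin hx.1.ne' hx.2.ne
        have hin : HasDerivAt (fun y : ℝ => 1 - y ^ 2) (-(2 * x)) x := by
          simpa using ((hasDerivAt_pow 2 x).const_sub 1)
        have hs : HasDerivAt (fun y : ℝ => Real.sqrt (1 - y ^ 2))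
            (1 / (2 * Real.sqrt (1 - x ^ 2)) * -(2 * x)) x :=
          (Real.hasDerivAt_sqrt h2.ne').comp x hin
        have := harc.sub hs
        refine this.congr_deriv ?_
        symm
        have hss : Real.sqrt (1 - x ^ 2) * Real.sqrt (1 - x ^ 2) = 1 - x ^ 2 :=
          Real.mul_self_sqrt h2.le
        rw [Nat.cast_one, one_mul, Real.sin_arccos]
        field_simp
        nlinarith [hss]
      have ha : Tendsto (fun y : ℝ => Real.arcsin y - Real.sqrt (1 - y ^ 2))
          (nhdsWithin (-1) (Ioi (-1))) (nhds (-(π/2))) := by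
        have := (hcont.tendsto (-1)).mono_left (nhdsWithin_le_nhds (s := Ioi (-1)))
        simpa [Real.arcsin_neg_one] using this
      have hb : Tendsto (fun y : ℝ => Real.arcsin y - Real.sqrt (1 - y ^ 2))
          (nhdsWithin 1 (Iio 1)) (nhds (π/2)) := by
        have := (hcont.tendsto 1).mono_left (nhdsWithin_le_nhds (s := Iio 1))
        simpa [Real.arcsin_one] using this
      have := intervalIntegral.integral_eq_sub_of_hasDerivAt_of_tendsto
        (by norm_num : (-1:ℝ) < 1) hderiv (i3 1) ha hb
      rw [this]; ring
  | succ n hn ih =>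
      have key : EqOn (fun x : ℝ => Real.sin ((n+1 : ℕ) * Real.arccos x) / (1 - x))
          (fun x : ℝ => Real.sin (n * Real.arccos x) / (1 - x) +
            ((Polynomial.Chebyshev.T ℝ ((n:ℤ)+1)).eval x / Real.sqrt (1 - x ^ 2) +
             (Polynomial.Chebyshev.T ℝ (n:ℤ)).eval x / Real.sqrt (1 - x ^ 2)))
          (uIcc (-1 : ℝ) 1) := by
        intro x hx
        rw [uIcc_of_le (by norm_num : (-1:ℝ) ≤ 1)] at hx
        rcases eq_or_lt_of_le hx.2 with h1 | h1
        · -- x = 1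
          simp only [h1]
          norm_num [Real.arccos_one]
        rcases eq_or_lt_of_le hx.1 with hm1 | hm1
        · -- x = -1
          simp only [← hm1]
          have e1 : Real.sqrt (1 - (-1:ℝ) ^ 2) = 0 := by norm_num
          have e2 : Real.arccos (-1 : ℝ) = π := Real.arccos_neg_one
          simp only [e1, e2, div_zero, add_zero]
          rw [Real.sin_nat_mul_pi, Real.sin_nat_mul_pi]
        · -- interior
          have hxx : x ∈ Ioo (-1:ℝ) 1 := ⟨hm1, h1⟩
          have h1x : (0:ℝ) < 1 - x := by nlinarith [hxx.2]
          have hsq : 0 < Real.sqrt (1 - x ^ 2) := sqrt_pos_of_mem hxx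
          have hTa : (Polynomial.Chebyshev.T ℝ ((n:ℤ)+1)).eval x
              = Real.cos (((n:ℝ)+1) * Real.arccos x) := by
            have := T_eval_eq_cos (Ioo_subset_Icc_self hxx) ((n:ℤ)+1)
            rwa [show (((n:ℤ)+1 : ℤ) : ℝ) = (n:ℝ)+1 by push_cast; ring] at this
          have hTb : (Polynomial.Chebyshev.T ℝ (n:ℤ)).eval x
              = Real.cos ((n:ℝ) * Real.arccos x) := by
            have := T_eval_eq_cos (Ioo_subset_Icc_self hxx) (n:ℤ)
            rwa [show (((n:ℤ) : ℤ) : ℝ) = (n:ℝ) by push_cast; ring] at this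
          have hsin : Real.sin (Real.arccos x) = Real.sqrt (1 - x ^ 2) := Real.sin_arccos x
          have hcos : Real.cos (Real.arccos x) = x := Real.cos_arccos (by linarith) (by linarith)
          have tid := trig_id n (Real.arccos x)
          rw [hsin, hcos] at tid
          have hstep : ((n:ℝ)+1) * Real.arccos x = (n:ℝ) * Real.arccos x + Real.arccos x := by
            ring
          rw [hstep] at tid hTa
          simp only
          push_cast
          rw [hstep, hTa, hTb]
          field_simp
          linear_combination (norm := ring_nf) tid
      rw [intervalIntegral.integral_congr key,
        intervalIntegral.integral_add (i3 n) ((i1 _).add (i1 _)),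
        intervalIntegral.integral_add (i1 _) (i1 _),
        ih, orth ((n:ℤ)+1) (by omega), orth (n:ℤ) (by exact_mod_cast hn)]
      ring


lemma i2' (k : ℤ) : IntervalIntegrable
    (fun x : ℝ => Real.log (1 - x) * (Polynomial.Chebyshev.T ℝ k).eval x /
      Real.sqrt (1 - x ^ 2)) volume (-1) 1 := by
  have h := i2 0 k
  simpa using h

lemma lbase (k : ℕ) (hk : 1 ≤ k) :
    ∫ x in (-1 : ℝ)..1,
      Real.log (1 - x) * (Polynomial.Chebyshev.T ℝ (k : ℤ)).eval x / Real.sqrt (1 - x ^ 2)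
      = -π / k := by
  have hk0 : (k : ℝ) ≠ 0 := by exact_mod_cast (by omega : k ≠ 0)
  set F : ℝ → ℝ := fun y => -(1/(k:ℝ)) * (Real.log (1 - y) * Real.sin (k * Real.arccos y))
    with hF
  set f' : ℝ → ℝ := fun x =>
    Real.log (1 - x) * (Polynomial.Chebyshev.T ℝ (k : ℤ)).eval x / Real.sqrt (1 - x ^ 2)
    + (1/(k:ℝ)) * (Real.sin (k * Real.arccos x) / (1 - x)) with hf'
  have hderiv : ∀ x ∈ Ioo (-1 : ℝ) 1, HasDerivAt F (f' x) x := by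
    intro x hx
    have h1x : (0:ℝ) < 1 - x := by nlinarith [hx.2]
    have hsq : 0 < Real.sqrt (1 - x ^ 2) := sqrt_pos_of_mem hx
    have hlog : HasDerivAt (fun y : ℝ => Real.log (1 - y)) ((1-x)⁻¹ * (-1)) x := by
      have hin : HasDerivAt (fun y : ℝ => 1 - y) (-1) x := by
        simpa using (hasDerivAt_id x).const_sub 1
      exact (Real.hasDerivAt_log h1x.ne').comp x hin
    have hs := hasDerivAt_sinka hx (k : ℤ)
    have hmul := (hlog.mul hs).const_mul (-(1/(k:ℝ)))
    refine hmul.congr_deriv ?_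
    symm
    rw [hf']
    push_cast
    field_simp
    ring
  have hint : IntervalIntegrable f' volume (-1) 1 := (i2' _).add ((i3 k).const_mul _)
  have ha : Tendsto F (nhdsWithin (-1) (Ioi (-1))) (nhds 0) := by
    have hc : ContinuousAt F (-1) := by
      apply ContinuousAt.mul continuousAt_const
      apply ContinuousAt.mul
      · exact (Real.continuousAt_log (by norm_num)).comp
          ((continuous_const.sub continuous_id).continuousAt)
      · exact (Real.continuous_sin.comp
          (continuous_const.mul Real.continuous_arccos)).continuousAt
    have := hc.tendsto.mono_left (nhdsWithin_le_nhds (s := Ioi (-1)))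
    simpa [hF, Real.arccos_neg_one, Real.sin_nat_mul_pi] using this
  have hb : Tendsto F (nhdsWithin 1 (Iio 1)) (nhds 0) := by
    have hmap : Tendsto (fun y : ℝ => 1 - y) (nhdsWithin 1 (Iio 1)) (nhdsWithin 0 (Ioi 0)) := by
      apply tendsto_nhdsWithin_of_tendsto_nhds_of_eventually_within
      · have h0 : Continuous (fun y : ℝ => 1 - y) := continuous_const.sub continuous_id
        have := h0.tendsto (1:ℝ)
        simpa using this.mono_left (nhdsWithin_le_nhds (s := Iio 1))
      · exact eventually_nhdsWithin_of_forall (fun x hx => by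
          simp only [Set.mem_Iio] at hx
          exact mem_Ioi.2 (by linarith))
    have hlog0 : Tendsto (fun u : ℝ => Real.log u * u ^ ((1:ℝ)/2))
        (nhdsWithin 0 (Ioi 0)) (nhds 0) := tendsto_log_mul_rpow_nhdsGT_zero (by norm_num)
    have hcomp := hlog0.comp hmap
    have hg : Tendsto (fun y : ℝ => Real.sqrt 2 *
        |Real.log (1 - y) * (1 - y) ^ ((1:ℝ)/2)|) (nhdsWithin 1 (Iio 1)) (nhds 0) := by
      have := (hcomp.abs).const_mul (Real.sqrt 2)
      simpa using this
    apply squeeze_zero_norm' ?_ hg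
    · filter_upwards [Ioo_mem_nhdsLT_of_mem
        (show (1:ℝ) ∈ Ioc (-1 : ℝ) 1 by constructor <;> norm_num)] with y hy
      have h1y : (0:ℝ) < 1 - y := by nlinarith [hy.2]
      have h2y : (0:ℝ) < 1 + y := by nlinarith [hy.1]
      have hsin : |Real.sin (k * Real.arccos y)| ≤ k * Real.sqrt (1 - y ^ 2) := by
        have := abs_sin_nat_mul_le k (Real.arccos y)
        rwa [Real.sin_arccos, abs_of_nonneg (Real.sqrt_nonneg _)] at this
      have hsplit : Real.sqrt (1 - y ^ 2) = Real.sqrt (1 - y) * Real.sqrt (1 + y) :=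
        sqrt_eq_mul hy
      have h2b : Real.sqrt (1 + y) ≤ Real.sqrt 2 := Real.sqrt_le_sqrt (by linarith)
      calc ‖F y‖ = (1/(k:ℝ)) * (|Real.log (1 - y)| * |Real.sin (k * Real.arccos y)|) := by
            rw [hF]
            simp [abs_mul, abs_of_nonneg (by positivity : (0:ℝ) ≤ 1/(k:ℝ))]
        _ ≤ (1/(k:ℝ)) * (|Real.log (1 - y)| * (k * Real.sqrt (1 - y ^ 2))) := by
            gcongr
        _ = |Real.log (1 - y)| * Real.sqrt (1 - y) * Real.sqrt (1 + y) := by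
            rw [hsplit]; field_simp
        _ ≤ |Real.log (1 - y)| * Real.sqrt (1 - y) * Real.sqrt 2 := by
            gcongr
        _ = Real.sqrt 2 * |Real.log (1 - y) * (1 - y) ^ ((1:ℝ)/2)| := by
            rw [abs_mul, ← Real.sqrt_eq_rpow,
              abs_of_nonneg (Real.sqrt_nonneg _)]
            ring
  have hF0 := intervalIntegral.integral_eq_sub_of_hasDerivAt_of_tendsto
    (by norm_num : (-1:ℝ) < 1) hderiv hint ha hb
  rw [sub_zero] at hF0
  have hsplit := intervalIntegral.integral_add (i2' (k : ℤ)) ((i3 k).const_mul (1/(k:ℝ)))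
  rw [hf'] at hF0
  rw [hsplit, intervalIntegral.integral_const_mul, sval k hk] at hF0
  have : ∫ x in (-1:ℝ)..1,
      Real.log (1 - x) * (Polynomial.Chebyshev.T ℝ (k : ℤ)).eval x / Real.sqrt (1 - x ^ 2)
      = -(1/(k:ℝ) * π) := by linarith
  rw [this]
  field_simp


lemma jrec (γ : ℕ) (k : ℤ) :
    Jint (γ + 1) k = Jint γ k - (Jint γ (k + 1) + Jint γ (k - 1)) / 2 := by
  have hT : ∀ x : ℝ, (Polynomial.Chebyshev.T ℝ (k+1)).eval x
      + (Polynomial.Chebyshev.T ℝ (k-1)).eval x = 2 * x * (Polynomial.Chebyshev.T ℝ k).eval x := by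
    intro x
    have h := Polynomial.Chebyshev.T_add_two ℝ (k - 1)
    rw [show k - 1 + 2 = k + 1 by ring, show k - 1 + 1 = k by ring] at h
    rw [h]
    simp [Polynomial.eval_sub, Polynomial.eval_mul]
    try ring
  have key : ∀ x : ℝ,
      ((1 - x) ^ (γ+1) * Real.log (1 - x)) * (Polynomial.Chebyshev.T ℝ k).eval x /
        Real.sqrt (1 - x ^ 2)
      = ((1 - x) ^ γ * Real.log (1 - x)) * (Polynomial.Chebyshev.T ℝ k).eval x /
          Real.sqrt (1 - x ^ 2)
        - (((1 - x) ^ γ * Real.log (1 - x)) * (Polynomial.Chebyshev.T ℝ (k+1)).eval x /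
            Real.sqrt (1 - x ^ 2)
          + ((1 - x) ^ γ * Real.log (1 - x)) * (Polynomial.Chebyshev.T ℝ (k-1)).eval x /
            Real.sqrt (1 - x ^ 2)) / 2 := by
    intro x
    have h := hT x
    have hp : (1 - x) ^ (γ+1) = (1 - x) ^ γ * (1 - x) := by ring
    rw [hp]
    linear_combination ((1 - x) ^ γ * Real.log (1 - x) / (2 * Real.sqrt (1 - x ^ 2))) * h
  rw [Jint, Jint, Jint, Jint]
  rw [intervalIntegral.integral_congr (g := fun x : ℝ =>
      ((1 - x) ^ γ * Real.log (1 - x)) * (Polynomial.Chebyshev.T ℝ k).eval x /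
          Real.sqrt (1 - x ^ 2)
        - (((1 - x) ^ γ * Real.log (1 - x)) * (Polynomial.Chebyshev.T ℝ (k+1)).eval x /
            Real.sqrt (1 - x ^ 2)
          + ((1 - x) ^ γ * Real.log (1 - x)) * (Polynomial.Chebyshev.T ℝ (k-1)).eval x /
            Real.sqrt (1 - x ^ 2)) / 2) (fun x _ => key x)]
  rw [intervalIntegral.integral_sub (i2 γ k) (((i2 γ (k+1)).add (i2 γ (k-1))).div_const 2),
    intervalIntegral.integral_div, intervalIntegral.integral_add (i2 γ (k+1)) (i2 γ (k-1))]

lemma Pp_succ (γ : ℕ) (t : ℝ) :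
    Pp (γ + 1) t = (t - γ - 1) * Pp γ t * (t + γ + 1) := by
  have h1 : Pp (γ+1) t = (∏ j ∈ Finset.range (2*γ+2), (t - γ + j)) * (t - (γ:ℝ) - 1) := by
    rw [Pp, show 2*(γ+1)+1 = 2*γ+2+1 by ring, Finset.prod_range_succ']
    congr 1
    · apply Finset.prod_congr rfl; intro j hj; push_cast; ring
    · push_cast; ring
  rw [h1, Finset.prod_range_succ, Pp]
  push_cast
  ring

lemma Pp_shift (γ : ℕ) (t : ℝ) :
    (t - γ) * Pp γ (t + 1) = Pp γ t * (t + γ + 1) := by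
  have e1 : ∏ j ∈ Finset.range (2*γ+2), (t - γ + j)
      = (t - (γ:ℝ)) * ∏ j ∈ Finset.range (2*γ+1), (t + 1 - γ + j) := by
    rw [Finset.prod_range_succ']
    rw [mul_comm]
    congr 1
    · norm_num
    · apply Finset.prod_congr rfl; intro j hj; push_cast; ring
  have e2 : ∏ j ∈ Finset.range (2*γ+2), (t - γ + j) = Pp γ t * (t + γ + 1) := by
    rw [Finset.prod_range_succ, Pp]
    push_cast
    ring
  rw [Pp, ← e1, e2]

lemma Pp_pos {γ : ℕ} {t : ℝ} (ht : (γ : ℝ) + 1 ≤ t) : 0 < Pp γ t := by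
  apply Finset.prod_pos
  intro i hi
  have : (0:ℝ) ≤ i := Nat.cast_nonneg i
  linarith


lemma jclosed (γ : ℕ) : ∀ k : ℕ, γ + 1 ≤ k → Pp γ (k : ℝ) * Jint γ (k : ℤ) = cc γ := by
  induction γ with
  | zero =>
      intro k hk
      have hk0 : (k : ℝ) ≠ 0 := by
        have : 1 ≤ k := hk
        positivity
      have hP : Pp 0 (k : ℝ) = (k : ℝ) := by
        simp [Pp]
      have hJ : Jint 0 (k : ℤ) = -π / k := by
        rw [Jint, ← lbase k hk]
        apply intervalIntegral.integral_congr
        intro x _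
        simp
      rw [hP, hJ, cc]
      field_simp
  | succ γ IH =>
      intro k hk
      have hk1 : (1:ℕ) ≤ k := by omega
      have h1 := IH k (by omega)
      have h2 := IH (k+1) (by omega)
      have h3 := IH (k-1) (by omega)
      have hrec := jrec γ (k : ℤ)
      rw [show (k:ℤ) + 1 = ((k+1 : ℕ) : ℤ) by push_cast; ring,
        show (k:ℤ) - 1 = ((k-1 : ℕ) : ℤ) by
          push_cast [Nat.cast_sub hk1]; ring] at hrec
      have hc2 : ((k+1 : ℕ) : ℝ) = (k:ℝ) + 1 := by push_cast; ring
      have hc3 : ((k-1 : ℕ) : ℝ) = (k:ℝ) - 1 := by push_cast [Nat.cast_sub hk1]; ring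
      rw [hc2] at h2
      rw [hc3] at h3
      set K := (k:ℝ) with hK
      set G := (γ:ℝ) with hG
      have hKG : G + 2 ≤ K := by
        rw [hK, hG]
        exact_mod_cast (by omega : γ + 2 ≤ k)
      have hG0 : 0 ≤ G := Nat.cast_nonneg γ
      have hq := Pp_shift γ K
      have hr := Pp_shift γ (K - 1)
      rw [show K - 1 + 1 = K by ring] at hr
      set p := Pp γ K with hp
      set q := Pp γ (K + 1) with hq'
      set r := Pp γ (K - 1) with hr'
      have hppos : 0 < p := Pp_pos (by linarith)
      have hqpos : 0 < q := Pp_pos (by linarith)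
      have hrpos : 0 < r := Pp_pos (by linarith)
      have hd1 : K - G ≠ 0 := by linarith
      have hd2 : K + G + 1 ≠ 0 := by linarith
      have hd3 : K - G - 1 ≠ 0 := by linarith
      have hd4 : K + G ≠ 0 := by linarith
      -- express the J's
      have hJ1 : Jint γ (k : ℤ) = cc γ / p := by
        rw [eq_div_iff hppos.ne']; linear_combination h1
      have hJ2 : Jint γ ((k+1 : ℕ) : ℤ) = cc γ * (K - G) / (p * (K + G + 1)) := by
        rw [eq_div_iff (by positivity)]
        rw [show p * (K + G + 1) = (K - G) * q by linear_combination - hq]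
        linear_combination (K - G) * h2
      have hJ3 : Jint γ ((k-1 : ℕ) : ℤ) = cc γ * (K + G) / (p * (K - G - 1)) := by
        rw [eq_div_iff (by positivity)]
        rw [show p * (K - G - 1) = r * (K + G) by linear_combination hr]
        linear_combination (K + G) * h3
      rw [Pp_succ γ K, hrec, hJ1, hJ2, hJ3]
      rw [show cc (γ+1) = -((γ : ℝ) + 1) * (2 * γ + 1) * cc γ from rfl]
      field_simp
      ring


theorem chebyshev_coeff_integer_gamma_log (γ : ℕ) (hγ : 1 ≤ γ) :
    (fun k : ℕ => (2 / π) * ∫ x in (-1 : ℝ)..1,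
        ((1 - x) ^ γ * Real.log (1 - x)) *
          (Polynomial.Chebyshev.T ℝ k).eval x / Real.sqrt (1 - x ^ 2)) =O[atTop]
      (fun k : ℕ => (k : ℝ) ^ (-(2 * (γ : ℝ)) - 1)) := by
  rw [isBigO_iff]
  refine ⟨(2 / π) * |cc γ| * 2 ^ (2 * γ + 1), ?_⟩
  filter_upwards [eventually_ge_atTop (2 * γ + 2)] with k hk
  have hkγ : γ + 1 ≤ k := by omega
  have hkpos : 0 < (k : ℝ) := by
    have : (1:ℕ) ≤ k := by omega
    exact_mod_cast Nat.lt_of_lt_of_le Nat.zero_lt_one this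
  have hcast : ((γ : ℝ) + 1) ≤ (k : ℝ) := by exact_mod_cast hkγ
  have hPpos : 0 < Pp γ (k : ℝ) := Pp_pos hcast
  have hJ : Jint γ (k : ℤ) = cc γ / Pp γ (k : ℝ) := by
    rw [eq_div_iff hPpos.ne']
    linear_combination jclosed γ k hkγ
  have hPlow : ((k : ℝ) / 2) ^ (2 * γ + 1) ≤ Pp γ (k : ℝ) := by
    have h1 : ((k : ℝ) / 2) ^ (2 * γ + 1)
        = ∏ _j ∈ Finset.range (2 * γ + 1), ((k : ℝ) / 2) := by
      rw [Finset.prod_const, Finset.card_range]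
    rw [h1, Pp]
    apply Finset.prod_le_prod
    · intro i _; positivity
    · intro i _
      have h2 : (γ : ℝ) ≤ (k : ℝ) / 2 := by
        have : (2 * γ : ℕ) ≤ k := by omega
        have h3 : ((2 * γ : ℕ) : ℝ) ≤ (k : ℝ) := by exact_mod_cast this
        push_cast at h3
        linarith
      have h4 : (0:ℝ) ≤ i := Nat.cast_nonneg i
      linarith
  have hnorm : ‖(k : ℝ) ^ (-(2 * (γ : ℝ)) - 1)‖ = ((k : ℝ) ^ (2 * γ + 1 : ℕ))⁻¹ := by
    rw [Real.norm_eq_abs, abs_of_pos (Real.rpow_pos_of_pos hkpos _),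
      show -(2 * (γ : ℝ)) - 1 = -((2 * γ + 1 : ℕ) : ℝ) by push_cast; ring,
      Real.rpow_neg hkpos.le, Real.rpow_natCast]
  rw [hnorm]
  have hfun : (2 / π) * ∫ x in (-1 : ℝ)..1,
        ((1 - x) ^ γ * Real.log (1 - x)) *
          (Polynomial.Chebyshev.T ℝ k).eval x / Real.sqrt (1 - x ^ 2)
      = (2 / π) * Jint γ (k : ℤ) := rfl
  rw [hfun, hJ]
  have hπ : (0:ℝ) < π := Real.pi_pos
  rw [Real.norm_eq_abs, abs_mul, abs_div, abs_of_pos hπ, abs_of_pos (by norm_num : (0:ℝ) < 2),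
    abs_div, abs_of_pos hPpos]
  have hkp : (0:ℝ) < ((k:ℝ)/2) ^ (2 * γ + 1) := by positivity
  calc 2 / π * (|cc γ| / Pp γ (k : ℝ))
      ≤ 2 / π * (|cc γ| / ((k : ℝ)/2) ^ (2 * γ + 1)) := by
        gcongr
    _ = 2 / π * |cc γ| * 2 ^ (2 * γ + 1) * ((k : ℝ) ^ (2 * γ + 1 : ℕ))⁻¹ := by
        rw [div_pow]
        field_simp
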